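/- Smallest denominator near an irrational of finite irrationality measure: let t be irrational with irrationality measure μ(t) = μ < ∞, and fix ε > 0. Then for all sufficiently small h > 0, the fraction P/Q of smallest denominator among all reduced fractions p/q with |t − p/q| < h satisfies h^{−1/(μ+ε)} < Q ≤ h^{−1 + 1/(μ+ε)}. -/

import Mathlib

open Real

set_option maxHeartbeats 2000000 in
/-- Smallest denominator near an irrational `t` of finite irrationality measure `μ`:
for every `ε > 0` and all sufficiently small `h > 0`, the fraction `P/Q` of smallest
denominator among all fractions within distance `h` of `t` satisfies
`h^{−1/(μ+ε)} < Q ≤ h^{−1+1/(μ+ε)}`. -/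
theorem stmt14 (t : ℝ) (ht : Irrational t)
    (A : Set ℝ)
    (hA : A = {m : ℝ | 0 < m ∧ Set.Infinite {pq : ℤ × ℕ | 0 < pq.2 ∧
      0 < |t - (pq.1 : ℝ) / pq.2| ∧ |t - (pq.1 : ℝ) / pq.2| < (pq.2 : ℝ) ^ (-m)}})
    (hbdd : BddAbove A)
    (μ : ℝ) (hμ : μ = sSup A)
    (ε : ℝ) (hε : 0 < ε) :
    ∃ h₀ : ℝ, 0 < h₀ ∧ ∀ h : ℝ, 0 < h → h < h₀ →
      ∀ P : ℤ, ∀ Q : ℕ, 0 < Q → |t - (P : ℝ) / Q| < h →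
        (∀ p : ℤ, ∀ q : ℕ, 0 < q → |t - (p : ℝ) / q| < h → Q ≤ q) →
        h ^ (-(1 / (μ + ε))) < (Q : ℝ) ∧ (Q : ℝ) ≤ h ^ (-1 + 1 / (μ + ε)) := by
  -- positivity of |t - p/q| for any rational p/q
  have habs : ∀ (p : ℤ) (q : ℕ), 0 < q → 0 < |t - (p : ℝ) / q| := by
    intro p q hq
    have hcast : ((p : ℝ) / q) = (((p : ℚ) / (q : ℚ) : ℚ) : ℝ) := by push_cast; ring
    rw [hcast, abs_pos, sub_ne_zero]
    exact ht.ne_rat _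
  -- μ ≥ 2
  have hμ2 : (2 : ℝ) ≤ μ := by
    have h2A : (2 : ℝ) ∈ A := by
      rw [hA]
      refine ⟨two_pos, ?_⟩
      have hinf := Real.infinite_rat_abs_sub_lt_one_div_den_sq_of_irrational ht
      have hinj : Function.Injective (fun r : ℚ => ((r.num, r.den) : ℤ × ℕ)) := by
        intro a b hab
        exact Rat.ext (congrArg Prod.fst hab) (congrArg Prod.snd hab)
      have himg := hinf.image (Set.injOn_of_injective hinj)
      refine himg.mono ?_
      rintro ⟨p, q⟩ ⟨r, hr, heq⟩
      have h1 : r.num = p := congrArg Prod.fst heq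
      have h2 : r.den = q := congrArg Prod.snd heq
      subst h1; subst h2
      have hcast : ((r.num : ℝ) / r.den) = (r : ℝ) := (Rat.cast_def r).symm
      refine ⟨r.pos, ?_, ?_⟩
      · rw [hcast, abs_pos, sub_ne_zero]; exact ht.ne_rat r
      · rw [hcast]
        have hden : (0 : ℝ) < (r.den : ℝ) := Nat.cast_pos.mpr r.pos
        calc |t - (r : ℝ)| < 1 / (r.den : ℝ) ^ 2 := hr
          _ = (r.den : ℝ) ^ (-(2 : ℝ)) := by
              rw [Real.rpow_neg hden.le, Real.rpow_two, one_div]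
    rw [hμ]; exact le_csSup hbdd h2A
  set m' : ℝ := μ + ε / 2 with hm'def
  set m : ℝ := μ + ε with hmdef
  have hm'2 : (2 : ℝ) ≤ m' := by simp only [hm'def]; linarith
  have hm2 : (2 : ℝ) ≤ m := by simp only [hmdef]; linarith
  have hm'm : m' < m := by simp only [hm'def, hmdef]; linarith
  have hmpos : (0 : ℝ) < m := by linarith
  have hm'pos : (0 : ℝ) < m' := by linarith
  have hm'1 : (0 : ℝ) < m' - 1 := by linarith
  -- the set of good approximations at exponent m' is finite
  have hm'A : m' ∉ A := by
    intro hmem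
    have := le_csSup hbdd hmem
    rw [← hμ] at this
    simp only [hm'def] at this; linarith
  have hfin : Set.Finite {pq : ℤ × ℕ | 0 < pq.2 ∧
      0 < |t - (pq.1 : ℝ) / pq.2| ∧ |t - (pq.1 : ℝ) / pq.2| < (pq.2 : ℝ) ^ (-m')} := by
    rcases Set.finite_or_infinite _ with h | h
    · exact h
    · exact absurd (by rw [hA]; exact ⟨hm'pos, h⟩) hm'A
  -- a positive lower bound δ on |t - p/q| over the exceptional set
  set F : Finset ℝ :=
    insert (1 : ℝ) (hfin.toFinset.image (fun pq : ℤ × ℕ => |t - (pq.1 : ℝ) / pq.2|)) with hFdef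
  have hFne : F.Nonempty := ⟨1, Finset.mem_insert_self _ _⟩
  set δ : ℝ := F.min' hFne with hδdef
  have hδpos : 0 < δ := by
    have hmem : δ ∈ F := F.min'_mem hFne
    rw [hFdef, Finset.mem_insert] at hmem
    rcases hmem with h1 | h1
    · rw [h1]; norm_num
    · rw [Finset.mem_image] at h1
      obtain ⟨pq, hpq, heq⟩ := h1
      rw [Set.Finite.mem_toFinset] at hpq
      rw [← heq]
      exact hpq.2.1
  have hδle : ∀ (p : ℤ) (q : ℕ), 0 < q → |t - (p : ℝ) / q| < (q : ℝ) ^ (-m') →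
      δ ≤ |t - (p : ℝ) / q| := by
    intro p q hq hlt
    apply Finset.min'_le
    rw [hFdef]
    refine Finset.mem_insert_of_mem (Finset.mem_image.mpr ⟨(p, q), ?_, rfl⟩)
    rw [Set.Finite.mem_toFinset]
    exact ⟨hq, habs p q hq, hlt⟩
  -- key lower bound
  have hL : ∀ (p : ℤ) (q : ℕ), 0 < q → |t - (p : ℝ) / q| < δ →
      (q : ℝ) ^ (-m') ≤ |t - (p : ℝ) / q| := by
    intro p q hq hlt
    by_contra hcon
    push_neg at hcon
    exact absurd hlt (not_lt.mpr (hδle p q hq hcon))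
  -- constants
  set α : ℝ := 1 - 1 / m with hαdef
  have hαpos : 0 < α := by
    have : 1 / m ≤ 1 / 2 := by
      apply one_div_le_one_div_of_le <;> linarith
    simp only [hαdef]; linarith
  set s : ℝ := m' / (m' - 1) with hsdef
  have hspos : 0 < s := div_pos hm'pos hm'1
  set β : ℝ := α * s - 1 with hβdef
  have hβpos : 0 < β := by
    have h1 : α * s = ((m - 1) * m') / (m * (m' - 1)) := by
      simp only [hαdef, hsdef]; field_simp; try ring
    have h2 : (1 : ℝ) < ((m - 1) * m') / (m * (m' - 1)) := by
      rw [lt_div_iff₀ (by positivity)]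
      nlinarith
    simp only [hβdef]; rw [h1]; linarith
  set C : ℝ := 2 ^ s with hCdef
  have hCpos : 0 < C := Real.rpow_pos_of_pos two_pos s
  -- define h₀
  refine ⟨min (min 1 δ) (min ((1 / 2 : ℝ) ^ (1 / α)) (min ((δ / 2) ^ (1 / α)) ((1 / C) ^ (1 / β)))),
    by positivity, ?_⟩
  intro h hh hlt P Q hQ hPQ hmin
  have hh1 : h < 1 := lt_of_lt_of_le hlt (le_trans (min_le_left _ _) (min_le_left _ _))
  have hhδ : h < δ := lt_of_lt_of_le hlt (le_trans (min_le_left _ _) (min_le_right _ _))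
  have hhalf : h < (1 / 2 : ℝ) ^ (1 / α) :=
    lt_of_lt_of_le hlt (le_trans (min_le_right _ _) (min_le_left _ _))
  have hhδ2 : h < (δ / 2) ^ (1 / α) :=
    lt_of_lt_of_le hlt (le_trans (min_le_right _ _) (le_trans (min_le_right _ _) (min_le_left _ _)))
  have hhC : h < (1 / C) ^ (1 / β) :=
    lt_of_lt_of_le hlt (le_trans (min_le_right _ _) (le_trans (min_le_right _ _) (min_le_right _ _)))
  -- generic: h < c^(1/e) implies h^e < c
  have hgen : ∀ c e : ℝ, 0 < c → 0 < e → h < c ^ (1 / e) → h ^ e < c := by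
    intro c e hc he hhc
    have := Real.rpow_lt_rpow hh.le hhc he
    rwa [← Real.rpow_mul hc.le, one_div_mul_cancel he.ne', Real.rpow_one] at this
  have hx2 : (2 : ℝ) < h ^ (-α) := by
    have h1 : h ^ α < 1 / 2 := hgen _ _ (by norm_num) hαpos hhalf
    have h2 : (0 : ℝ) < h ^ α := Real.rpow_pos_of_pos hh α
    rw [Real.rpow_neg hh.le]
    rw [lt_inv_comm₀ two_pos h2] 
    linarith
  have hxδ : 2 / δ < h ^ (-α) := by
    have h1 : h ^ α < δ / 2 := hgen _ _ (by positivity) hαpos hhδ2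
    have h2 : (0 : ℝ) < h ^ α := Real.rpow_pos_of_pos hh α
    have h3 : (δ / 2)⁻¹ < (h ^ α)⁻¹ := (inv_lt_inv₀ (by positivity) h2).mpr h1
    rw [Real.rpow_neg hh.le]
    rwa [inv_div] at h3
  have hChβ : C * h ^ β < 1 := by
    have h1 : h ^ β < 1 / C := hgen _ _ (by positivity) hβpos hhC
    rw [lt_div_iff₀ hCpos] at h1; linarith
  constructor
  · -- lower bound
    have h1 : (Q : ℝ) ^ (-m') ≤ |t - (P : ℝ) / Q| := hL P Q hQ (hPQ.trans hhδ)
    have hQ1 : (1 : ℝ) ≤ (Q : ℝ) := by exact_mod_cast hQ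
    have hQpos : (0 : ℝ) < (Q : ℝ) := by linarith
    have h2 : (Q : ℝ) ^ (-m) ≤ (Q : ℝ) ^ (-m') :=
      Real.rpow_le_rpow_of_exponent_le hQ1 (by linarith)
    have h3 : (Q : ℝ) ^ (-m) < h := lt_of_le_of_lt (h2.trans h1) hPQ
    have h4 := Real.rpow_lt_rpow_of_neg (Real.rpow_pos_of_pos hQpos (-m)) h3
      (neg_neg_iff_pos.mpr (by positivity) : -(1 / m) < 0)
    rwa [← Real.rpow_mul hQpos.le, neg_mul_neg, mul_one_div_cancel hmpos.ne',
      Real.rpow_one] at h4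
  · -- upper bound
    set N : ℕ := ⌊h ^ (-α)⌋₊ with hNdef
    have hN1 : 1 ≤ N := Nat.le_floor (by push_cast; linarith)
    have hNpos : (0 : ℝ) < (N : ℝ) := by exact_mod_cast hN1
    have hNge : h ^ (-α) / 2 ≤ (N : ℝ) := by
      have := Nat.sub_one_lt_floor (h ^ (-α))
      rw [← hNdef] at this
      linarith
    have hNle : (N : ℝ) ≤ h ^ (-α) := Nat.floor_le (by positivity)
    obtain ⟨r, hr1, hr2⟩ := Real.exists_rat_abs_sub_le_and_den_le t (Nat.lt_of_lt_of_le one_pos hN1 : 0 < N)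
    set p : ℤ := r.num
    set q : ℕ := r.den
    have hq : 0 < q := r.pos
    have hqR : (0 : ℝ) < (q : ℝ) := Nat.cast_pos.mpr hq
    have hq1 : (1 : ℝ) ≤ (q : ℝ) := by exact_mod_cast hq
    have hcast : (r : ℝ) = (p : ℝ) / q := Rat.cast_def r
    rw [hcast] at hr1
    have hr1' : |t - (p : ℝ) / q| ≤ 1 / ((N : ℝ) * q) := by
      refine hr1.trans ?_
      apply one_div_le_one_div_of_le (by positivity)
      push_cast
      exact mul_le_mul_of_nonneg_right (by linarith) hqR.le
    have hltδ : |t - (p : ℝ) / q| < δ := by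
      have h1 : 1 / ((N : ℝ) * q) ≤ 1 / (N : ℝ) := by
        apply one_div_le_one_div_of_le hNpos
        exact le_mul_of_one_le_right hNpos.le hq1
      have h2 : 1 / (N : ℝ) < δ := by
        rw [div_lt_iff₀ hNpos]
        have : 2 / δ < 2 * (N : ℝ) := by linarith
        rw [div_lt_iff₀ hδpos] at this
        linarith
      linarith [hr1'.trans h1]
    have hkey : (q : ℝ) ^ (-m') ≤ 1 / ((N : ℝ) * q) := (hL p q hq hltδ).trans hr1'
    -- deduce N ≤ q^(m'-1)
    have hNq : (N : ℝ) ≤ (q : ℝ) ^ (m' - 1) := by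
      have h1 : (N : ℝ) * q ≤ (q : ℝ) ^ m' := by
        rw [Real.rpow_neg hqR.le, one_div] at hkey
        have h0 : (0 : ℝ) < (N : ℝ) * q := by positivity
        have := (inv_le_inv₀ (Real.rpow_pos_of_pos hqR m') h0).mp ?first
        · exact this
        case first => exact hkey
      rw [show m' = (m' - 1) + 1 by ring, Real.rpow_add hqR, Real.rpow_one] at h1
      exact le_of_mul_le_mul_right h1 hqR
    have hqge : (N : ℝ) ^ (1 / (m' - 1)) ≤ (q : ℝ) := by
      have := Real.rpow_le_rpow hNpos.le hNq (le_of_lt (by positivity : (0:ℝ) < 1/(m'-1)))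
      rwa [← Real.rpow_mul hqR.le, mul_one_div_cancel hm'1.ne', Real.rpow_one] at this
    have hNs : (N : ℝ) * (N : ℝ) ^ (1 / (m' - 1)) = (N : ℝ) ^ s := by
      have hs' : s = 1 + 1 / (m' - 1) := by
        rw [hsdef]; field_simp; ring
      rw [hs', Real.rpow_add hNpos, Real.rpow_one]
    have hbound : |t - (p : ℝ) / q| ≤ (N : ℝ) ^ (-s) := by
      have h1 : 1 / ((N : ℝ) * q) ≤ 1 / ((N : ℝ) ^ s) := by
        apply one_div_le_one_div_of_le (by positivity)
        rw [← hNs]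
        exact mul_le_mul_of_nonneg_left hqge hNpos.le
      have h2 : 1 / ((N : ℝ) ^ s) = (N : ℝ) ^ (-s) := by
        rw [Real.rpow_neg hNpos.le, one_div]
      exact hr1'.trans (h1.trans_eq h2)
    have hfinal : (N : ℝ) ^ (-s) < h := by
      have h1 : (h ^ (-α) / 2) ^ (-s) ≥ (N : ℝ) ^ (-s) := by
        apply Real.rpow_le_rpow_of_nonpos (by positivity) hNge (by linarith)
      have h2 : (h ^ (-α) / 2) ^ (-s) = C * h ^ (α * s) := by
        have e1 : (h ^ (-α)) ^ (-s) = h ^ (α * s) := by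
          rw [← Real.rpow_mul hh.le, neg_mul_neg]
        rw [Real.div_rpow (by positivity) (by norm_num), e1,
          Real.rpow_neg (by norm_num : (0:ℝ) ≤ 2), div_eq_mul_inv, inv_inv, mul_comm]
      have h3 : C * h ^ (α * s) < h := by
        have : α * s = β + 1 := by rw [hβdef]; ring
        rw [this, Real.rpow_add hh, Real.rpow_one, ← mul_assoc]
        calc C * h ^ β * h < 1 * h := by
              apply mul_lt_mul_of_pos_right hChβ hh
          _ = h := one_mul h
      calc (N : ℝ) ^ (-s) ≤ (h ^ (-α) / 2) ^ (-s) := h1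
        _ = C * h ^ (α * s) := h2
        _ < h := h3
    have hQq : Q ≤ q := hmin p q hq (hbound.trans_lt hfinal)
    have : (Q : ℝ) ≤ (N : ℝ) := by
      exact_mod_cast hQq.trans hr2
    have hexp : -1 + 1 / (μ + ε) = -α := by
      simp only [hαdef, hmdef]; ring
    rw [hexp]
    linarith
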